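/- For all complete binary trees T1 with m leaves and T2 with n leaves, and all α ∈ S_m, β ∈ S_n: T1(α)⋆T2(β) − T2(β)⋆T1(α) = Σ_γ (T1∧T2)(γ), where the sum is over all γ ∈ S_{m+n} with std(γ(1)⋯γ(m)) = α and std(γ(m+1)⋯γ(m+n)) = β, and T1∧T2 is the complete binary tree with left subtree T1 and right subtree T2, evaluated with leaf labels γ. -/

import Mathlib

/-- The free module on words of positive integers, with coefficients in `R`.
`ℚ[S_n]` is identified with the span of the permutation words of {1,…,n}. -/
abbrev FW (R : Type) [CommRing R] := (List ℕ) →₀ R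

variable {R : Type} [CommRing R]

/-- Concatenation product, extended bilinearly. -/
noncomputable def catW (x y : FW R) : FW R :=
  x.sum fun u a => y.sum fun v b => Finsupp.single (u ++ v) (a * b)

/-- The bracket [x,y] = x·y − y·x of the concatenation product. -/
noncomputable def brakW (x y : FW R) : FW R := catW x y - catW y x

/-- (Incomplete) binary trees; `nil` is the empty tree. The complete binary tree with
`t.nodes + 1` leaves whose internal nodes form `t` is implicit in the definitions below. -/
inductive BT
  | nil : BT
  | nd : BT → BT → BT
deriving DecidableEq

/-- Number of nodes of a binary tree. -/
def BT.nodes : BT → ℕ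
  | .nil => 0
  | .nd l r => l.nodes + r.nodes + 1

/-- The evaluation T(σ) of the complete binary tree `T` whose internal nodes form `t`, with
leaves labelled left to right by the word `w`: each leaf gets the one-letter word of its label
and each internal node the bracket of concatenation. -/
noncomputable def evalBT : BT → List ℕ → FW R
  | .nil, w => Finsupp.single w 1
  | .nd l r, w => brakW (evalBT l (w.take (l.nodes + 1))) (evalBT r (w.drop (l.nodes + 1)))

/-- The standardization of a word with distinct letters: each letter is replaced by its rank. -/
def stdW (w : List ℕ) : List ℕ := w.map fun x => (w.filter (· ≤ x)).length

/-- The set of permutation words of {1, …, n}. -/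
def permWords (n : ℕ) : Finset (List ℕ) := (List.range' 1 n).permutations.toFinset

/-- Convolution α⋆β of two permutation words: the sum of all permutation words γ of size
|α|+|β| with std(γ(1)⋯γ(m)) = α and std(γ(m+1)⋯γ(m+n)) = β. -/
noncomputable def convW (u v : List ℕ) : FW R :=
  ∑ γ ∈ (permWords (u.length + v.length)).filter
      (fun γ => stdW (γ.take u.length) = u ∧ stdW (γ.drop u.length) = v),
    Finsupp.single γ 1

/-- The convolution product, extended bilinearly. -/
noncomputable def starW (x y : FW R) : FW R :=
  x.sum fun u a => y.sum fun v b => (a * b) • convW u v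

/-- Whether the word `w` is an admissible labelling of (the completion of) `t`: at each internal
node, the smallest label lies in the left subtree and the largest in the right subtree. -/
def admB : BT → List ℕ → Bool
  | .nil, _ => true
  | .nd l r, w =>
    admB l (w.take (l.nodes + 1)) && admB r (w.drop (l.nodes + 1))
      && decide ((w.take (l.nodes + 1)).minimum = w.minimum)
      && decide ((w.drop (l.nodes + 1)).maximum = w.maximum)

/-- c_t: the sum of the evaluations T(σ) over all admissible labellings σ of the complete
binary tree whose internal nodes form `t`. -/
noncomputable def cElt (t : BT) : FW R :=
  ∑ w ∈ (permWords (t.nodes + 1)).filter (fun w => admB t w = true), evalBT t w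


/-- sorted version of a word -/
def sortW (w : List ℕ) : List ℕ := w.mergeSort (fun a b => a ≤ b)

/-- the increasing enumeration of the letters of `w` -/
def letf (w : List ℕ) : ℕ → ℕ := fun i => (sortW w).getD (i - 1) 0

/-- relabel the permutation word `u` by the letters of `w` -/
def relW (w u : List ℕ) : List ℕ := u.map (letf w)

lemma sortW_perm (w : List ℕ) : (sortW w).Perm w := List.mergeSort_perm w _

lemma sortW_sorted (w : List ℕ) : (sortW w).Pairwise (· ≤ ·) := by
  have h := List.pairwise_mergeSort (le := fun a b : ℕ => decide (a ≤ b))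
    (fun a b c hab hbc => by simp_all; omega) (fun a b => by simp [Nat.le_total]) w
  exact h.imp (fun h => by simpa using h)

lemma sortW_eq_of_perm {w w' : List ℕ} (h : w.Perm w') : sortW w = sortW w' :=
  List.Perm.eq_of_pairwise' (sortW_sorted w) (sortW_sorted w')
    (((sortW_perm w).trans h).trans (sortW_perm w').symm)

lemma sortW_pairwise_lt {w : List ℕ} (hw : w.Nodup) : (sortW w).Pairwise (· < ·) := by
  have h2 : (sortW w).Nodup := (sortW_perm w).nodup_iff.mpr hw
  exact ((sortW_sorted w).and h2).imp
    (fun h => lt_of_le_of_ne h.1 h.2)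

lemma sorted_getD {s : List ℕ} (hs : s.Pairwise (· < ·)) {x : ℕ} (hx : x ∈ s) :
    s.getD ((s.filter (· ≤ x)).length - 1) 0 = x := by
  induction s with
  | nil => simp at hx
  | cons a t ih =>
    have ha : ∀ y ∈ t, a < y := (List.pairwise_cons.mp hs).1
    rcases List.mem_cons.mp hx with rfl | hx'
    · have ht : t.filter (· ≤ x) = [] :=
        List.filter_eq_nil_iff.mpr (fun y hy => by simpa using (ha y hy).not_ge)
      simp [List.filter_cons, ht]
    · have hax : a ≤ x := le_of_lt (ha x hx')
      have hne : t.filter (· ≤ x) ≠ [] := by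
        apply List.ne_nil_of_mem (a := x)
        exact List.mem_filter.mpr ⟨hx', by simp⟩
      have hlen : (t.filter (· ≤ x)).length ≠ 0 := by
        simpa [List.length_eq_zero_iff] using hne
      have h1 : ((a :: t).filter (· ≤ x)).length = (t.filter (· ≤ x)).length + 1 := by
        simp [List.filter_cons, hax]
      rw [h1]
      have h2 : (t.filter (· ≤ x)).length + 1 - 1 = ((t.filter (· ≤ x)).length - 1) + 1 := by omega
      rw [h2]
      simpa using ih (List.pairwise_cons.mp hs).2 hx'

lemma rank_range' {k x : ℕ} (hx : x ≤ k) :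
    ((List.range' 1 k).filter (· ≤ x)).length = x := by
  induction k with
  | zero => interval_cases x; simp
  | succ k ih =>
    rw [List.range'_concat, List.filter_append]
    rcases Nat.lt_or_ge x (k+1) with h | h
    · have : ([1 + 1 * k].filter (· ≤ x)) = [] := by
        simp only [List.filter_cons, List.filter_nil]
        have : ¬ (1 + 1 * k ≤ x) := by omega
        simp [this]; omega
      rw [this, List.length_append, ih (by omega)]
      simp
    · have hxk : x = k + 1 := by omega
      have h1 : (List.range' 1 k).filter (· ≤ x) = List.range' 1 k := by
        apply List.filter_eq_self.mpr
        intro y hy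
        have := List.mem_range'_1.mp hy
        simp; omega
      have h2 : ([1 + 1 * k].filter (· ≤ x)) = [1 + 1 * k] := by
        simp only [List.filter_cons, List.filter_nil]
        have : 1 + 1 * k ≤ x := by omega
        simp [this]; omega
      rw [h1, h2]
      simp [hxk]

lemma rank_perm {k : ℕ} {u : List ℕ} (hu : u.Perm (List.range' 1 k)) {x : ℕ} (hxk : x ≤ k) :
    (u.filter (· ≤ x)).length = x := by
  rw [(hu.filter _).length_eq]; exact rank_range' hxk
lemma mem_permWords {k : ℕ} {w : List ℕ} : w ∈ permWords k ↔ w.Perm (List.range' 1 k) := by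
  simp [permWords, List.mem_permutations]

lemma permWords_length {k : ℕ} {w : List ℕ} (h : w ∈ permWords k) : w.length = k := by
  simpa using (mem_permWords.mp h).length_eq

lemma permWords_nodup {k : ℕ} {w : List ℕ} (h : w ∈ permWords k) : w.Nodup :=
  (mem_permWords.mp h).nodup_iff.mpr (List.nodup_range' (s := 1) (n := k))

lemma stdW_length (w : List ℕ) : (stdW w).length = w.length := List.length_map _

lemma stdW_eq_self {k : ℕ} {u : List ℕ} (hu : u ∈ permWords k) : stdW u = u := by
  have hp := mem_permWords.mp hu
  unfold stdW
  conv_rhs => rw [← List.map_id u]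
  apply List.map_congr_left
  intro x hx
  have hxr := hp.mem_iff.mp hx
  have := List.mem_range'_1.mp hxr
  exact rank_perm hp (by omega)

lemma letf_rank {w : List ℕ} (hw : w.Nodup) {x : ℕ} (hx : x ∈ w) :
    letf w ((w.filter (· ≤ x)).length) = x := by
  unfold letf
  have h1 : (w.filter (· ≤ x)).length = ((sortW w).filter (· ≤ x)).length :=
    (((sortW_perm w).symm.filter _).length_eq)
  rw [h1]
  exact sorted_getD (sortW_pairwise_lt hw) ((sortW_perm w).mem_iff.mpr hx)

lemma relW_stdW {w : List ℕ} (hw : w.Nodup) : relW w (stdW w) = w := by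
  unfold relW stdW
  rw [List.map_map]
  conv_rhs => rw [← List.map_id w]
  exact List.map_congr_left (fun x hx => letf_rank hw hx)

lemma letf_lt {w : List ℕ} (hw : w.Nodup) {i j : ℕ} (hi : 1 ≤ i) (hij : i < j)
    (hj : j ≤ w.length) : letf w i < letf w j := by
  have hlen : (sortW w).length = w.length := (sortW_perm w).length_eq
  have h1 : i - 1 < (sortW w).length := by omega
  have h2 : j - 1 < (sortW w).length := by omega
  unfold letf
  rw [List.getD_eq_getElem _ _ h1, List.getD_eq_getElem _ _ h2]
  exact List.pairwise_iff_getElem.mp (sortW_pairwise_lt hw) _ _ h1 h2 (by omega)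

lemma letf_le_iff {w : List ℕ} (hw : w.Nodup) {i j : ℕ} (hi : 1 ≤ i) (hj : 1 ≤ j)
    (hiL : i ≤ w.length) (hjL : j ≤ w.length) : letf w i ≤ letf w j ↔ i ≤ j := by
  constructor
  · intro h
    by_contra hc
    exact absurd (letf_lt hw hj (by omega) hiL) (by omega)
  · intro h
    rcases Nat.eq_or_lt_of_le h with rfl | h'
    · exact le_rfl
    · exact le_of_lt (letf_lt hw hi h' hjL)

lemma relW_length (w u : List ℕ) : (relW w u).length = u.length := List.length_map _

lemma mem_permWords_bounds {k : ℕ} {u : List ℕ} (hu : u ∈ permWords k) {i : ℕ} (hi : i ∈ u) :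
    1 ≤ i ∧ i ≤ k := by
  have := List.mem_range'_1.mp ((mem_permWords.mp hu).mem_iff.mp hi)
  omega

lemma stdW_relW {k : ℕ} {w u : List ℕ} (hw : w.Nodup) (hwl : w.length = k)
    (hu : u ∈ permWords k) : stdW (relW w u) = u := by
  unfold stdW relW
  rw [List.map_map]
  conv_rhs => rw [← List.map_id u]
  apply List.map_congr_left
  intro i hi
  obtain ⟨hi1, hik⟩ := mem_permWords_bounds hu hi
  have hfm : (u.map (letf w)).filter (· ≤ letf w i) = (u.filter (· ≤ i)).map (letf w) := by
    rw [List.filter_map]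
    congr 1
    apply List.filter_congr
    intro j hj
    obtain ⟨hj1, hjk⟩ := mem_permWords_bounds hu hj
    simp only [Function.comp_apply, decide_eq_decide]
    exact letf_le_iff hw hj1 hi1 (by omega) (by omega)
  simp only [Function.comp_apply, hfm, List.length_map]
  exact rank_perm (mem_permWords.mp hu) hik

lemma range'_map_letf {w : List ℕ} {k : ℕ} (hwl : w.length = k) :
    (List.range' 1 k).map (letf w) = sortW w := by
  have hlen : (sortW w).length = k := by rw [(sortW_perm w).length_eq, hwl]
  apply List.ext_getElem
  · simp [hlen]
  · intro i h1 h2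
    simp only [List.getElem_map, List.getElem_range']
    unfold letf
    rw [List.getD_eq_getElem _ _ (by simp at h1; omega)]
    congr 1
    simp at h1; omega

lemma relW_perm {k : ℕ} {w u : List ℕ} (hwl : w.length = k) (hu : u ∈ permWords k) :
    (relW w u).Perm w := by
  unfold relW
  have h1 : (u.map (letf w)).Perm ((List.range' 1 k).map (letf w)) :=
    (mem_permWords.mp hu).map _
  rw [range'_map_letf hwl] at h1
  exact h1.trans (sortW_perm w)

lemma letf_eq_of_perm {w w' : List ℕ} (h : w.Perm w') : letf w = letf w' := by
  unfold letf; rw [sortW_eq_of_perm h]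

lemma relW_cancel {k : ℕ} {w u α : List ℕ} (hw : w.Nodup) (hwl : w.length = k)
    (hu : u ∈ permWords k) (hα : stdW w = α) : relW (relW w u) α = w := by
  have hperm : (relW w u).Perm w := relW_perm hwl hu
  have hl := letf_eq_of_perm hperm
  unfold relW at hl ⊢
  rw [hl]
  subst hα
  exact relW_stdW hw

open Finsupp in
lemma catW_zero_left (y : FW R) : catW 0 y = 0 := Finsupp.sum_zero_index

lemma catW_add_left (x x' y : FW R) : catW (x + x') y = catW x y + catW x' y := by
  unfold catW
  apply Finsupp.sum_add_index
  · intro u _; simp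
  · intro u _ a a'; simp [add_mul, Finsupp.single_add, Finsupp.sum_add]

lemma catW_single_sum (u : List ℕ) (a : R) (y : FW R) :
    catW (Finsupp.single u a) y = y.sum fun v b => Finsupp.single (u ++ v) (a * b) := by
  unfold catW
  apply Finsupp.sum_single_index
  simp

lemma catW_single_single (u v : List ℕ) (a b : R) :
    catW (Finsupp.single u a) (Finsupp.single v b) = Finsupp.single (u ++ v) (a * b) := by
  rw [catW_single_sum]
  apply Finsupp.sum_single_index
  simp

lemma catW_sum_left {ι : Type} (s : Finset ι) (f : ι → FW R) (y : FW R) :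
    catW (∑ u ∈ s, f u) y = ∑ u ∈ s, catW (f u) y := by
  induction s using Finset.cons_induction with
  | empty => simp [catW_zero_left]
  | cons a s ha ih => simp [Finset.sum_cons, catW_add_left, ih]

lemma catW_zero_right (x : FW R) : catW x 0 = 0 := by
  unfold catW; simp [Finsupp.sum_zero_index]

lemma catW_add_right (x y y' : FW R) : catW x (y + y') = catW x y + catW x y' := by
  unfold catW
  rw [← Finsupp.sum_add]
  apply Finsupp.sum_congr
  intro u _
  apply Finsupp.sum_add_index
  · intro v _; simp
  · intro v _ b b'; simp [mul_add, Finsupp.single_add]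

lemma catW_sum_right {κ : Type} (x : FW R) (t : Finset κ) (g : κ → FW R) :
    catW x (∑ v ∈ t, g v) = ∑ v ∈ t, catW x (g v) := by
  induction t using Finset.cons_induction with
  | empty => simp [catW_zero_right]
  | cons a t ha ih => simp [Finset.sum_cons, catW_add_right, ih]

lemma catW_sum_sum {ι κ : Type} (s : Finset ι) (t : Finset κ) (p : ι → List ℕ)
    (q : κ → List ℕ) (c : ι → R) (d : κ → R) :
    catW (∑ u ∈ s, Finsupp.single (p u) (c u)) (∑ v ∈ t, Finsupp.single (q v) (d v))
      = ∑ u ∈ s, ∑ v ∈ t, Finsupp.single (p u ++ q v) (c u * d v) := by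
  rw [catW_sum_left]
  refine Finset.sum_congr rfl fun u _ => ?_
  rw [catW_sum_right]
  exact Finset.sum_congr rfl fun v _ => catW_single_single _ _ _ _

lemma mapDomain_eq_sum (g : List ℕ → List ℕ) (x : FW R) :
    Finsupp.mapDomain g x = ∑ u ∈ x.support, Finsupp.single (g u) (x u) := rfl

lemma catW_mapDomain (f : ℕ → ℕ) (x y : FW R) :
    catW (Finsupp.mapDomain (List.map f) x) (Finsupp.mapDomain (List.map f) y)
      = Finsupp.mapDomain (List.map f) (catW x y) := by
  induction x using Finsupp.induction_linear with
  | zero => simp [Finsupp.mapDomain_zero, catW_zero_left]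
  | add a b ha hb => simp [Finsupp.mapDomain_add, catW_add_left, ha, hb]
  | single u a =>
    rw [Finsupp.mapDomain_single]
    induction y using Finsupp.induction_linear with
    | zero => simp [Finsupp.mapDomain_zero, catW_zero_right]
    | add c d hc hd => simp only [Finsupp.mapDomain_add, catW_add_right, hc, hd]
    | single v b =>
      rw [Finsupp.mapDomain_single, catW_single_single,
        catW_single_single, Finsupp.mapDomain_single, List.map_append]

lemma evalBT_map (f : ℕ → ℕ) : ∀ (t : BT) (w : List ℕ),
    (evalBT t (w.map f) : FW R) = Finsupp.mapDomain (List.map f) (evalBT t w)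
  | .nil, w => by simp [evalBT, Finsupp.mapDomain_single]
  | .nd l r, w => by
    simp only [evalBT, brakW]
    rw [← List.map_take, ← List.map_drop, evalBT_map f l, evalBT_map f r,
      catW_mapDomain, catW_mapDomain]
    exact (map_sub (Finsupp.mapDomain.addMonoidHom (List.map f) : FW R →+ FW R)
      (catW (evalBT l (w.take (l.nodes + 1))) (evalBT r (w.drop (l.nodes + 1))))
      (catW (evalBT r (w.drop (l.nodes + 1))) (evalBT l (w.take (l.nodes + 1))))).symm

lemma catW_support {x y : FW R} {w : List ℕ} (hw : w ∈ (catW x y).support) :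
    ∃ u ∈ x.support, ∃ v ∈ y.support, w = u ++ v := by
  unfold catW at hw
  obtain ⟨u, hu, hw2⟩ := Finset.mem_biUnion.mp (Finsupp.support_sum hw)
  obtain ⟨v, hv, hw3⟩ := Finset.mem_biUnion.mp (Finsupp.support_sum hw2)
  exact ⟨u, hu, v, hv, by simpa using Finsupp.support_single_subset hw3⟩

lemma evalBT_support_perm : ∀ (t : BT) (w u : List ℕ),
    u ∈ (evalBT t w : FW R).support → u.Perm w
  | .nil, w, u, hu => by
    have := Finsupp.support_single_subset hu
    simp at this; subst this; rfl
  | .nd l r, w, u, hu => by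
    simp only [evalBT, brakW] at hu
    rcases Finset.mem_union.mp (Finsupp.support_sub hu) with h | h
    · obtain ⟨u1, h1, u2, h2, rfl⟩ := catW_support h
      exact ((evalBT_support_perm l _ _ h1).append (evalBT_support_perm r _ _ h2)).trans
        (by rw [List.take_append_drop])
    · obtain ⟨u2, h2, u1, h1, rfl⟩ := catW_support h
      refine (((evalBT_support_perm r _ _ h2).append (evalBT_support_perm l _ _ h1)).trans ?_)
      exact List.perm_append_comm.trans (by rw [List.take_append_drop])

lemma take_drop_facts {m n : ℕ} {γ : List ℕ} (hγp : γ ∈ permWords (m + n)) :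
    (γ.take m).Nodup ∧ (γ.drop m).Nodup ∧ (γ.take m).length = m ∧ (γ.drop m).length = n := by
  have hnd := permWords_nodup hγp
  have hlen : γ.length = m + n := permWords_length hγp
  refine ⟨hnd.sublist (List.take_sublist _ _), hnd.sublist (List.drop_sublist _ _), ?_, ?_⟩
  · rw [List.length_take]; omega
  · rw [List.length_drop]; omega

lemma mem_F {m n : ℕ} {w1 w2 u v : List ℕ} (h1 : w1.Nodup) (h2 : w2.Nodup)
    (l1 : w1.length = m) (l2 : w2.length = n)
    (hp : (w1 ++ w2).Perm (List.range' 1 (m + n)))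
    (hu : u ∈ permWords m) (hv : v ∈ permWords n) :
    relW w1 u ++ relW w2 v ∈ (permWords (m + n)).filter
      (fun γ => stdW (γ.take m) = u ∧ stdW (γ.drop m) = v) := by
  have p1 : (relW w1 u).Perm w1 := relW_perm l1 hu
  have p2 : (relW w2 v).Perm w2 := relW_perm l2 hv
  have hlen1 : (relW w1 u).length = m := by rw [relW_length, permWords_length hu]
  have htake : (relW w1 u ++ relW w2 v).take m = relW w1 u := by
    rw [← hlen1, List.take_left]
  have hdrop : (relW w1 u ++ relW w2 v).drop m = relW w2 v := by
    rw [← hlen1, List.drop_left]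
  refine Finset.mem_filter.mpr ⟨mem_permWords.mpr ((p1.append p2).trans hp), ?_, ?_⟩
  · rw [htake]; exact stdW_relW h1 l1 hu
  · rw [hdrop]; exact stdW_relW h2 l2 hv

lemma conv_sum₁ {m n : ℕ} {α β u v : List ℕ}
    (hα : α ∈ permWords m) (hβ : β ∈ permWords n)
    (hu : u ∈ permWords m) (hv : v ∈ permWords n) :
    ∑ γ ∈ (permWords (m + n)).filter
        (fun γ => stdW (γ.take m) = α ∧ stdW (γ.drop m) = β),
      Finsupp.single (relW (γ.take m) u ++ relW (γ.drop m) v) (1 : R)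
    = convW u v := by
  have hul : u.length = m := permWords_length hu
  have hvl : v.length = n := permWords_length hv
  rw [convW, hul, hvl]
  refine Finset.sum_nbij' (i := fun γ => relW (γ.take m) u ++ relW (γ.drop m) v)
    (j := fun δ => relW (δ.take m) α ++ relW (δ.drop m) β) ?_ ?_ ?_ ?_ ?_
  · intro γ hγ
    obtain ⟨hγp, _, _⟩ := Finset.mem_filter.mp hγ
    obtain ⟨d1, d2, d3, d4⟩ := take_drop_facts hγp
    exact mem_F d1 d2 d3 d4 (by rw [List.take_append_drop]; exact mem_permWords.mp hγp) hu hv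
  · intro δ hδ
    obtain ⟨hδp, _, _⟩ := Finset.mem_filter.mp hδ
    obtain ⟨d1, d2, d3, d4⟩ := take_drop_facts hδp
    exact mem_F d1 d2 d3 d4 (by rw [List.take_append_drop]; exact mem_permWords.mp hδp) hα hβ
  · intro γ hγ
    obtain ⟨hγp, hs1, hs2⟩ := Finset.mem_filter.mp hγ
    obtain ⟨d1, d2, d3, d4⟩ := take_drop_facts hγp
    have hlen1 : (relW (γ.take m) u).length = m := by rw [relW_length, hul]
    rw [List.take_left' hlen1, List.drop_left' hlen1]
    rw [relW_cancel d1 d3 hu hs1, relW_cancel d2 d4 hv hs2, List.take_append_drop]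
  · intro δ hδ
    obtain ⟨hδp, hs1, hs2⟩ := Finset.mem_filter.mp hδ
    obtain ⟨d1, d2, d3, d4⟩ := take_drop_facts hδp
    have hlen1 : (relW (δ.take m) α).length = m := by rw [relW_length, permWords_length hα]
    rw [List.take_left' hlen1, List.drop_left' hlen1]
    rw [relW_cancel d1 d3 hα hs1, relW_cancel d2 d4 hβ hs2, List.take_append_drop]
  · intro γ _; rfl

lemma conv_sum₂ {m n : ℕ} {α β u v : List ℕ}
    (hα : α ∈ permWords m) (hβ : β ∈ permWords n)
    (hu : u ∈ permWords m) (hv : v ∈ permWords n) :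
    ∑ γ ∈ (permWords (m + n)).filter
        (fun γ => stdW (γ.take m) = α ∧ stdW (γ.drop m) = β),
      Finsupp.single (relW (γ.drop m) v ++ relW (γ.take m) u) (1 : R)
    = convW v u := by
  have hul : u.length = m := permWords_length hu
  have hvl : v.length = n := permWords_length hv
  rw [convW, hul, hvl]
  refine Finset.sum_nbij' (i := fun γ => relW (γ.drop m) v ++ relW (γ.take m) u)
    (j := fun δ => relW (δ.drop n) α ++ relW (δ.take n) β) ?_ ?_ ?_ ?_ ?_
  · intro γ hγ
    obtain ⟨hγp, _, _⟩ := Finset.mem_filter.mp hγ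
    obtain ⟨d1, d2, d3, d4⟩ := take_drop_facts hγp
    refine mem_F d2 d1 d4 d3 ?_ hv hu
    rw [Nat.add_comm n m]
    exact List.perm_append_comm.trans (by rw [List.take_append_drop]; exact mem_permWords.mp hγp)
  · intro δ hδ
    obtain ⟨hδp, _, _⟩ := Finset.mem_filter.mp hδ
    obtain ⟨d1, d2, d3, d4⟩ := take_drop_facts hδp
    refine mem_F d2 d1 d4 d3 ?_ hα hβ
    rw [Nat.add_comm m n]
    exact List.perm_append_comm.trans (by rw [List.take_append_drop]; exact mem_permWords.mp hδp)
  · intro γ hγ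
    obtain ⟨hγp, hs1, hs2⟩ := Finset.mem_filter.mp hγ
    obtain ⟨d1, d2, d3, d4⟩ := take_drop_facts hγp
    have hlen1 : (relW (γ.drop m) v).length = n := by rw [relW_length, hvl]
    rw [List.take_left' hlen1, List.drop_left' hlen1]
    rw [relW_cancel d2 d4 hv hs2, relW_cancel d1 d3 hu hs1, List.take_append_drop]
  · intro δ hδ
    obtain ⟨hδp, hs1, hs2⟩ := Finset.mem_filter.mp hδ
    obtain ⟨d1, d2, d3, d4⟩ := take_drop_facts hδp
    have hlen1 : (relW (δ.drop n) α).length = m := by rw [relW_length, permWords_length hα]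
    rw [List.take_left' hlen1, List.drop_left' hlen1]
    rw [relW_cancel d2 d4 hα hs2, relW_cancel d1 d3 hβ hs1, List.take_append_drop]
  · intro γ _; rfl

lemma starW_eq (x y : FW R) :
    starW x y = ∑ u ∈ x.support, ∑ v ∈ y.support, (x u * y v) • convW u v := rfl

theorem stmt7 : ∀ t1 t2 : BT, ∀ m n : ℕ, t1.nodes + 1 = m → t2.nodes + 1 = n →
    ∀ α ∈ permWords m, ∀ β ∈ permWords n,
    starW (evalBT t1 α) (evalBT t2 β) - starW (evalBT t2 β) (evalBT t1 α)
      = ∑ γ ∈ (permWords (m + n)).filter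
            (fun γ => stdW (γ.take m) = α ∧ stdW (γ.drop m) = β),
          (evalBT (BT.nd t1 t2) γ : FW ℚ) := by
  intro t1 t2 m n hm hn α hα β hβ
  set X : FW ℚ := evalBT t1 α with hX
  set Y : FW ℚ := evalBT t2 β with hY
  have hXu : ∀ u ∈ X.support, u ∈ permWords m := fun u hu =>
    mem_permWords.mpr ((evalBT_support_perm t1 α u hu).trans (mem_permWords.mp hα))
  have hYv : ∀ v ∈ Y.support, v ∈ permWords n := fun v hv =>
    mem_permWords.mpr ((evalBT_support_perm t2 β v hv).trans (mem_permWords.mp hβ))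
  set F := (permWords (m + n)).filter
      (fun γ => stdW (γ.take m) = α ∧ stdW (γ.drop m) = β) with hF
  -- pointwise description of the summands of the RHS
  have key : ∀ γ ∈ F, (evalBT (BT.nd t1 t2) γ : FW ℚ)
      = (∑ u ∈ X.support, ∑ v ∈ Y.support,
          Finsupp.single (relW (γ.take m) u ++ relW (γ.drop m) v) (X u * Y v))
        - ∑ u ∈ X.support, ∑ v ∈ Y.support,
          Finsupp.single (relW (γ.drop m) v ++ relW (γ.take m) u) (X u * Y v) := by
    intro γ hγ
    obtain ⟨hγp, hs1, hs2⟩ := Finset.mem_filter.mp hγ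
    obtain ⟨d1, d2, d3, d4⟩ := take_drop_facts hγp
    have e1 : relW (γ.take m) α = γ.take m := by rw [← hs1]; exact relW_stdW d1
    have e2 : relW (γ.drop m) β = γ.drop m := by rw [← hs2]; exact relW_stdW d2
    have eX : (evalBT t1 (γ.take m) : FW ℚ)
        = ∑ u ∈ X.support, Finsupp.single (relW (γ.take m) u) (X u) := by
      calc (evalBT t1 (γ.take m) : FW ℚ) = evalBT t1 (relW (γ.take m) α) := by rw [e1]
        _ = Finsupp.mapDomain (List.map (letf (γ.take m))) X := evalBT_map _ t1 α
        _ = ∑ u ∈ X.support, Finsupp.single (relW (γ.take m) u) (X u) :=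
            mapDomain_eq_sum _ _
    have eY : (evalBT t2 (γ.drop m) : FW ℚ)
        = ∑ v ∈ Y.support, Finsupp.single (relW (γ.drop m) v) (Y v) := by
      calc (evalBT t2 (γ.drop m) : FW ℚ) = evalBT t2 (relW (γ.drop m) β) := by rw [e2]
        _ = Finsupp.mapDomain (List.map (letf (γ.drop m))) Y := evalBT_map _ t2 β
        _ = ∑ v ∈ Y.support, Finsupp.single (relW (γ.drop m) v) (Y v) :=
            mapDomain_eq_sum _ _
    show (brakW (evalBT t1 (γ.take (t1.nodes + 1))) (evalBT t2 (γ.drop (t1.nodes + 1))) : FW ℚ) = _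
    rw [hm, brakW, eX, eY, catW_sum_sum, catW_sum_sum]
    congr 1
    rw [Finset.sum_comm]
    exact Finset.sum_congr rfl fun u _ => Finset.sum_congr rfl fun v _ => by rw [mul_comm]
  -- both sides equal E
  have inner₁ : ∀ u ∈ X.support, ∀ v ∈ Y.support,
      (∑ γ ∈ F, Finsupp.single (relW (γ.take m) u ++ relW (γ.drop m) v) (X u * Y v))
        = (X u * Y v) • convW u v := by
    intro u hu v hv
    rw [← conv_sum₁ hα hβ (hXu u hu) (hYv v hv), Finset.smul_sum]
    exact Finset.sum_congr rfl fun γ _ => by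
      rw [Finsupp.smul_single, smul_eq_mul, mul_one]
  have inner₂ : ∀ u ∈ X.support, ∀ v ∈ Y.support,
      (∑ γ ∈ F, Finsupp.single (relW (γ.drop m) v ++ relW (γ.take m) u) (X u * Y v))
        = (X u * Y v) • convW v u := by
    intro u hu v hv
    rw [← conv_sum₂ hα hβ (hXu u hu) (hYv v hv), Finset.smul_sum]
    exact Finset.sum_congr rfl fun γ _ => by
      rw [Finsupp.smul_single, smul_eq_mul, mul_one]
  have hR : (∑ γ ∈ F, (evalBT (BT.nd t1 t2) γ : FW ℚ))
      = ∑ u ∈ X.support, ∑ v ∈ Y.support,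
          ((X u * Y v) • convW u v - (X u * Y v) • convW v u) := by
    rw [Finset.sum_congr rfl key, Finset.sum_sub_distrib]
    have split : (∑ u ∈ X.support, ∑ v ∈ Y.support,
          ((X u * Y v) • (convW u v : FW ℚ) - (X u * Y v) • (convW v u : FW ℚ)))
        = (∑ u ∈ X.support, ∑ v ∈ Y.support, (X u * Y v) • (convW u v : FW ℚ))
          - ∑ u ∈ X.support, ∑ v ∈ Y.support, (X u * Y v) • (convW v u : FW ℚ) := by
      rw [← Finset.sum_sub_distrib]
      exact Finset.sum_congr rfl fun u _ => by rw [Finset.sum_sub_distrib]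
    rw [split]
    congr 1
    · rw [Finset.sum_comm]
      refine Finset.sum_congr rfl fun u hu => ?_
      rw [Finset.sum_comm]
      exact Finset.sum_congr rfl fun v hv => inner₁ u hu v hv
    · rw [Finset.sum_comm]
      refine Finset.sum_congr rfl fun u hu => ?_
      rw [Finset.sum_comm]
      exact Finset.sum_congr rfl fun v hv => inner₂ u hu v hv
  have hL : starW X Y - starW Y X
      = ∑ u ∈ X.support, ∑ v ∈ Y.support,
          ((X u * Y v) • convW u v - (X u * Y v) • convW v u) := by
    rw [starW_eq, starW_eq, Finset.sum_comm (s := Y.support) (t := X.support),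
      ← Finset.sum_sub_distrib]
    refine Finset.sum_congr rfl fun u hu => ?_
    rw [← Finset.sum_sub_distrib]
    exact Finset.sum_congr rfl fun v hv => by rw [mul_comm (Y v) (X u)]
  rw [hL]
  exact hR.symm
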